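/- Let f: {0,...,k}^3 → ℂ, let (z^1, z^0, z^{-1}) be n-bit strings with configuration basis numbers (n_s)_{s∈{0,1}^3}, and let a random clause σ be given by k i.i.d. uniform variable indices in [n] and k i.i.d. uniform negation bits. Then E_σ[f(Σ_{(l,ν)∈σ} z^1_l ⊕ ν, Σ_{(l,ν)∈σ} z^0_l ⊕ ν, Σ_{(l,ν)∈σ} z^{-1}_l ⊕ ν)] = 2^{−k} Σ over weight-k configurations (k_s) of (k!/∏_s k_s!)(∏_s ((n_s+n_{s̄})/n)^{k_s}) · f(h^1, h^0, h^{-1}), where h^t = Σ_{s: s^t = 1} k_s and s̄ denotes the bitwise complement of s. -/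

import Mathlib

open Finset Nat

lemma multinomial_pascal {β : Type*} [Fintype β] [DecidableEq β] (ks : β → ℕ) (k : ℕ)
    (h : ∑ s, ks s = k + 1) :
    Nat.multinomial univ ks =
      ∑ b ∈ univ.filter (fun b => ks b ≠ 0),
        Nat.multinomial univ (Function.update ks b (ks b - 1)) := by
  have hpos : 0 < ∏ s, (ks s) ! := Finset.prod_pos (fun s _ => Nat.factorial_pos _)
  refine Nat.eq_of_mul_eq_mul_left hpos ?_
  rw [Nat.multinomial_spec, h, Finset.mul_sum]
  have step : ∀ b ∈ univ.filter (fun b => ks b ≠ 0),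
      (∏ s, (ks s) !) * Nat.multinomial univ (Function.update ks b (ks b - 1))
        = ks b * k ! := by
    intro b hb
    rw [mem_filter] at hb
    have hb' := hb.2
    have hprod : (∏ s, (ks s) !) = ks b * ∏ s, ((Function.update ks b (ks b - 1)) s) ! := by
      rw [← Finset.mul_prod_erase univ _ (mem_univ b),
          ← Finset.mul_prod_erase univ (fun s => ((Function.update ks b (ks b - 1)) s) !) (mem_univ b)]
      rw [Function.update_self]
      have : ∏ s ∈ univ.erase b, ((Function.update ks b (ks b - 1)) s) ! = ∏ s ∈ univ.erase b, (ks s) ! := by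
        refine Finset.prod_congr rfl fun s hs => ?_
        rw [Function.update_of_ne (Finset.ne_of_mem_erase hs)]
      rw [this, ← mul_assoc]
      congr 1
      obtain ⟨m, hm⟩ := Nat.exists_eq_succ_of_ne_zero hb'
      rw [hm]
      simp [Nat.factorial_succ]
    have hsum : ∑ s, (Function.update ks b (ks b - 1)) s = k := by
      rw [Finset.sum_update_of_mem (mem_univ b)]
      have := Finset.sum_update_of_mem (f := ks) (mem_univ b) (ks b)
      rw [Function.update_eq_self] at this
      omega
    rw [hprod, mul_assoc, Nat.multinomial_spec, hsum]
  rw [Finset.sum_congr rfl step, ← Finset.sum_mul]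
  rw [Finset.sum_filter_ne_zero, h]
  rw [Nat.factorial_succ]

lemma key_lemma {β : Type*} [Fintype β] [DecidableEq β] (k : ℕ) (w : β → ℂ)
    (F : (β → ℕ) → ℂ) :
    ∑ c : Fin k → β, (∏ m, w (c m)) * F (fun s => (univ.filter (fun m => c m = s)).card)
    = ∑ ks ∈ piAntidiag (univ : Finset β) k,
        (Nat.multinomial univ ks : ℂ) * (∏ s, w s ^ ks s) * F ks := by
  induction k generalizing F with
  | zero =>
    haveI : Subsingleton (Fin 0 → β) := ⟨fun a b => funext fun i => i.elim0⟩
    rw [Finset.piAntidiag_zero, Finset.sum_singleton,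
      Fintype.sum_subsingleton _ (fun i : Fin 0 => i.elim0)]
    have h1 : Nat.multinomial (univ : Finset β) 0 = 1 := by
      have := Nat.multinomial_spec (univ : Finset β) (0 : β → ℕ)
      simpa using this
    simp [h1]
    rfl
  | succ k ih =>
    -- reindex LHS by Fin.cons
    rw [← Equiv.sum_comp (Fin.consEquiv fun _ : Fin (k+1) => β)
      (fun c : Fin (k+1) → β =>
        (∏ m, w (c m)) * F (fun s => (univ.filter (fun m => c m = s)).card)),
      Fintype.sum_prod_type]
    have hcnt : ∀ (b : β) (c : Fin k → β) (s : β),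
        ((univ.filter fun m : Fin (k+1) => (Fin.cons b c : Fin (k+1) → β) m = s).card)
          = (if b = s then 1 else 0) + (univ.filter fun m : Fin k => c m = s).card := by
      intro b c s
      rw [Finset.card_filter, Fin.sum_univ_succ, Finset.card_filter]
      simp
    have hLHS : ∀ b : β, ∑ c : Fin k → β,
        (∏ m : Fin (k+1), w (Fin.consEquiv (fun _ => β) (b, c) m)) *
          F (fun s => (univ.filter (fun m : Fin (k+1) =>
            Fin.consEquiv (fun _ => β) (b, c) m = s)).card)
        = ∑ ks ∈ piAntidiag (univ : Finset β) k,
            (Nat.multinomial univ ks : ℂ) * (∏ s, w s ^ ks s) *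
              (w b * F (fun s => (if b = s then 1 else 0) + ks s)) := by
      intro b
      rw [← ih (fun ks => w b * F (fun s => (if b = s then 1 else 0) + ks s))]
      refine Finset.sum_congr rfl fun c _ => ?_
      have h1 : ∀ m, Fin.consEquiv (fun _ : Fin (k+1) => β) (b, c) m
          = (Fin.cons b c : Fin (k+1) → β) m := fun m => rfl
      simp only [h1]
      rw [Fin.prod_univ_succ]
      simp only [Fin.cons_zero, Fin.cons_succ]
      have h2 : (fun s => ((univ.filter fun m : Fin (k+1) => (Fin.cons b c : Fin (k+1) → β) m = s).card))
          = fun s => (if b = s then 1 else 0) + (univ.filter fun m : Fin k => c m = s).card :=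
        funext fun s => hcnt b c s
      rw [h2]
      ring
    rw [Finset.sum_congr rfl (fun b _ => hLHS b)]
    -- RHS: apply Pascal
    have hRHS : ∀ ks ∈ piAntidiag (univ : Finset β) (k+1),
        (Nat.multinomial univ ks : ℂ) * (∏ s, w s ^ ks s) * F ks
        = ∑ b ∈ univ.filter (fun b => ks b ≠ 0),
            (Nat.multinomial univ (Function.update ks b (ks b - 1)) : ℂ) *
              (∏ s, w s ^ ks s) * F ks := by
      intro ks hks
      rw [Finset.mem_piAntidiag] at hks
      rw [multinomial_pascal ks k hks.1]
      push_cast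
      rw [Finset.sum_mul, Finset.sum_mul]
    rw [Finset.sum_congr rfl hRHS]
    -- bridge via bijection
    rw [← Finset.sum_product', Finset.sum_sigma']
    refine Finset.sum_nbij'
      (fun p => ⟨Function.update p.2 p.1 (p.2 p.1 + 1), p.1⟩)
      (fun q => (q.2, Function.update q.1 q.2 (q.1 q.2 - 1))) ?_ ?_ ?_ ?_ ?_
    · rintro ⟨b, ks⟩ hp
      rw [Finset.mem_product, Finset.mem_piAntidiag] at hp
      rw [Finset.mem_sigma, Finset.mem_piAntidiag]
      have hs1 := Finset.sum_update_of_mem (f := ks) (Finset.mem_univ b) (ks b + 1)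
      have hs2 := Finset.sum_update_of_mem (f := ks) (Finset.mem_univ b) (ks b)
      rw [Function.update_eq_self] at hs2
      have hsum : ∑ x : β, ks x = k := hp.2.1
      refine ⟨⟨?_, fun i _ => Finset.mem_univ i⟩, ?_⟩
      · rw [hs1]; omega
      · simp [Function.update_self]
    · rintro ⟨ks, b⟩ hq
      rw [Finset.mem_sigma, Finset.mem_piAntidiag, Finset.mem_filter] at hq
      dsimp only at hq ⊢
      rw [Finset.mem_product, Finset.mem_piAntidiag]
      have hs1 := Finset.sum_update_of_mem (f := ks) (Finset.mem_univ b) (ks b - 1)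
      have hs2 := Finset.sum_update_of_mem (f := ks) (Finset.mem_univ b) (ks b)
      rw [Function.update_eq_self] at hs2
      have hb := hq.2.2
      refine ⟨Finset.mem_univ b, ?_, fun i _ => Finset.mem_univ i⟩
      rw [hs1]
      have h1 : ∑ x : β, ks x = k + 1 := hq.1.1
      omega
    · rintro ⟨b, ks⟩ _
      simp [Function.update_idem, Function.update_self, Function.update_eq_self]
    · rintro ⟨ks, b⟩ hq
      rw [Finset.mem_sigma, Finset.mem_filter] at hq
      have hb := hq.2.2
      ext1
      · simp only [Function.update_idem, Function.update_self]
        rw [Nat.sub_add_cancel (Nat.one_le_iff_ne_zero.mpr hb), Function.update_eq_self]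
      · rfl
    · rintro ⟨b, ks⟩ hp
      rw [Finset.mem_product, Finset.mem_piAntidiag] at hp
      simp only
      have e1 : Function.update (Function.update ks b (ks b + 1)) b
          (Function.update ks b (ks b + 1) b - 1) = ks := by
        simp [Function.update_idem, Function.update_self, Function.update_eq_self]
      rw [e1]
      have e2 : ∏ s, w s ^ (Function.update ks b (ks b + 1)) s
          = w b * ∏ s, w s ^ ks s := by
        rw [← Finset.mul_prod_erase univ (fun s => w s ^ (Function.update ks b (ks b + 1)) s)
            (Finset.mem_univ b),
          ← Finset.mul_prod_erase univ (fun s => w s ^ ks s) (Finset.mem_univ b)]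
        have : ∏ s ∈ univ.erase b, w s ^ (Function.update ks b (ks b + 1)) s
            = ∏ s ∈ univ.erase b, w s ^ ks s :=
          Finset.prod_congr rfl fun s hs => by
            rw [Function.update_of_ne (Finset.ne_of_mem_erase hs)]
        rw [this, Function.update_self, pow_succ]
        ring
      rw [e2]
      have e3 : (fun s => (if b = s then 1 else 0) + ks s)
          = Function.update ks b (ks b + 1) := by
        funext s
        rcases eq_or_ne b s with rfl | h
        · rw [Function.update_self, if_pos rfl]; omega
        · rw [Function.update_of_ne (Ne.symm h), if_neg h, zero_add]
      rw [e3]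
      ring

-- sum over g : Fin k → γ of G (ph ∘ g), grouped by c = ph ∘ g
lemma lemA {β γ : Type*} [Fintype β] [DecidableEq β] [Fintype γ] [DecidableEq γ]
    (k : ℕ) (ph : γ → β) (G : (Fin k → β) → ℂ) :
    ∑ g : Fin k → γ, G (ph ∘ g)
      = ∑ c : Fin k → β,
          (∏ m : Fin k, ((univ.filter (fun x => ph x = c m)).card : ℂ)) * G c := by
  have hfib : ∀ c : Fin k → β,
      (univ.filter (fun g : Fin k → γ => ph ∘ g = c)) =
        Fintype.piFinset (fun m => univ.filter (fun x => ph x = c m)) := by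
    intro c
    ext g
    simp [funext_iff, funext_iff]
  rw [← Finset.sum_fiberwise univ (fun g : Fin k → γ => ph ∘ g) (fun g => G (ph ∘ g))]
  refine Finset.sum_congr rfl fun c _ => ?_
  have h1 : ∑ g ∈ univ.filter (fun g : Fin k → γ => ph ∘ g = c), G (ph ∘ g)
      = ∑ _g ∈ univ.filter (fun g : Fin k → γ => ph ∘ g = c), G c :=
    Finset.sum_congr rfl fun g hg => by rw [(Finset.mem_filter.mp hg).2]
  rw [h1, Finset.sum_const, hfib, Fintype.card_piFinset, nsmul_eq_mul]
  push_cast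
  ring

-- counting by predicate
lemma lemB {β : Type*} [Fintype β] [DecidableEq β] {k : ℕ} (c : Fin k → β)
    (p : β → Prop) [DecidablePred p] :
    (univ.filter (fun m => p (c m))).card
      = ∑ s ∈ univ.filter p, (univ.filter (fun m => c m = s)).card := by
  rw [Finset.card_eq_sum_card_fiberwise (f := c) (t := univ.filter p)
    (fun m hm => by rw [Finset.mem_coe, Finset.mem_filter] at hm; exact Finset.mem_coe.mpr (Finset.mem_filter.mpr ⟨mem_univ _, hm.2⟩))]
  refine Finset.sum_congr rfl fun s hs => ?_
  rw [Finset.mem_filter] at hs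
  congr 1
  ext m
  simp only [Finset.mem_filter, Finset.mem_univ, true_and]
  exact ⟨fun h => h.2, fun h => ⟨h ▸ hs.2, h⟩⟩

/-- Averaging a function of the Hamming weights of the negated restrictions of three
bitstrings over a random clause (`k` i.i.d. uniform variable indices with replacement,
`k` i.i.d. uniform negations):
`E_σ f(|z¹_σ|, |z⁰_σ|, |z⁻¹_σ|) = 2^{−k} Σ_{k ∈ P(k)} (k!/∏ k_s!) ∏_s ((n_s+n_{s̄})/n)^{k_s}
  · f(h¹, h⁰, h⁻¹)` with `h^t = Σ_{s : s^t = 1} k_s`. -/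
theorem average_hamming_weight_function_over_random_clause
    (n k : ℕ) (hn : 1 ≤ n) (f : ℕ → ℕ → ℕ → ℂ)
    (z1 z0 zm1 : Fin n → Bool)
    (ncfg : Bool × Bool × Bool → ℕ)
    (hcfg : ∀ s, ncfg s =
      (Finset.univ.filter (fun j : Fin n => (z1 j, z0 j, zm1 j) = s)).card) :
    (((n : ℂ) ^ k * 2 ^ k)⁻¹) *
      ∑ σ : (Fin k → Fin n) × (Fin k → Bool),
        f ((Finset.univ.filter (fun m : Fin k => xor (z1 (σ.1 m)) (σ.2 m) = true)).card)
          ((Finset.univ.filter (fun m : Fin k => xor (z0 (σ.1 m)) (σ.2 m) = true)).card)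
          ((Finset.univ.filter (fun m : Fin k => xor (zm1 (σ.1 m)) (σ.2 m) = true)).card)
    = ((2 : ℂ) ^ k)⁻¹ *
        ∑ ks ∈ Finset.piAntidiag (Finset.univ : Finset (Bool × Bool × Bool)) k,
          (Nat.multinomial Finset.univ ks : ℂ) *
            (∏ s : Bool × Bool × Bool,
              (((ncfg s + ncfg (!s.1, !s.2.1, !s.2.2) : ℕ) : ℂ) / n) ^ ks s) *
            f (∑ s ∈ Finset.univ.filter (fun s : Bool × Bool × Bool => s.1 = true), ks s)
              (∑ s ∈ Finset.univ.filter (fun s : Bool × Bool × Bool => s.2.1 = true), ks s)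
              (∑ s ∈ Finset.univ.filter (fun s : Bool × Bool × Bool => s.2.2 = true), ks s) := by
  classical
  set ph : Fin n × Bool → Bool × Bool × Bool :=
    fun x => (xor (z1 x.1) x.2, xor (z0 x.1) x.2, xor (zm1 x.1) x.2) with hph
  set F : ((Bool × Bool × Bool) → ℕ) → ℂ := fun ks =>
    f (∑ s ∈ Finset.univ.filter (fun s : Bool × Bool × Bool => s.1 = true), ks s)
      (∑ s ∈ Finset.univ.filter (fun s : Bool × Bool × Bool => s.2.1 = true), ks s)
      (∑ s ∈ Finset.univ.filter (fun s : Bool × Bool × Bool => s.2.2 = true), ks s) with hF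
  set w : Bool × Bool × Bool → ℂ :=
    fun s => ((ncfg s + ncfg (!s.1, !s.2.1, !s.2.2) : ℕ) : ℂ) with hw
  -- fiber cardinality
  have hfib : ∀ s : Bool × Bool × Bool,
      ((univ.filter (fun x : Fin n × Bool => ph x = s)).card : ℂ) = w s := by
    intro s
    have hl : ∀ l : Fin n, (∑ b : Bool, if ph (l, b) = s then 1 else 0)
        = ((if (z1 l, z0 l, zm1 l) = s then 1 else 0) +
            (if (z1 l, z0 l, zm1 l) = (!s.1, !s.2.1, !s.2.2) then 1 else 0) : ℕ) := by
      intro l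
      rw [Fintype.sum_bool]
      have h1 : (ph (l, false) = s) ↔ ((z1 l, z0 l, zm1 l) = s) := by
        simp [hph]
      have h2 : (ph (l, true) = s) ↔ ((z1 l, z0 l, zm1 l) = (!s.1, !s.2.1, !s.2.2)) := by
        rcases s with ⟨a, b, c⟩
        simp only [hph, Prod.mk.injEq, Bool.xor_true]
        constructor
        · rintro ⟨r1, r2, r3⟩
          simp [← r1, ← r2, ← r3]
        · rintro ⟨r1, r2, r3⟩
          simp [r1, r2, r3]
      rw [if_congr h1 rfl rfl, if_congr h2 rfl rfl, add_comm]
    have hnat : (univ.filter (fun x : Fin n × Bool => ph x = s)).card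
        = ncfg s + ncfg (!s.1, !s.2.1, !s.2.2) := by
      rw [hcfg, hcfg, Finset.card_filter, Fintype.sum_prod_type]
      rw [Finset.sum_congr rfl (fun l _ => hl l), Finset.sum_add_distrib,
        Finset.card_filter, Finset.card_filter]
    rw [hw]
    dsimp only
    exact_mod_cast hnat
  -- step 1 : reindex the clause sum
  have step1 : (∑ σ : (Fin k → Fin n) × (Fin k → Bool),
        f ((Finset.univ.filter (fun m : Fin k => xor (z1 (σ.1 m)) (σ.2 m) = true)).card)
          ((Finset.univ.filter (fun m : Fin k => xor (z0 (σ.1 m)) (σ.2 m) = true)).card)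
          ((Finset.univ.filter (fun m : Fin k => xor (zm1 (σ.1 m)) (σ.2 m) = true)).card))
      = ∑ g : Fin k → Fin n × Bool,
          F (fun s => (univ.filter (fun m => (ph ∘ g) m = s)).card) := by
    refine (Fintype.sum_equiv (Equiv.arrowProdEquivProdArrow (Fin k) (fun _ => Fin n) (fun _ => Bool)) _ _ ?_).symm
    intro g
    rw [hF]
    beta_reduce
    rw [← lemB (ph ∘ g) (fun s => s.1 = true), ← lemB (ph ∘ g) (fun s => s.2.1 = true),
      ← lemB (ph ∘ g) (fun s => s.2.2 = true)]
    rfl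
  rw [step1, lemA k ph
    (fun c => F (fun s => (univ.filter (fun m => c m = s)).card))]
  have step2 : ∀ c : Fin k → Bool × Bool × Bool,
      (∏ m : Fin k, ((univ.filter (fun x => ph x = c m)).card : ℂ))
        = ∏ m : Fin k, w (c m) :=
    fun c => Finset.prod_congr rfl fun m _ => hfib (c m)
  simp only [step2]
  rw [key_lemma k w F]
  -- final scalar algebra
  rw [Finset.mul_sum, Finset.mul_sum]
  refine Finset.sum_congr rfl fun ks hks => ?_
  rw [Finset.mem_piAntidiag] at hks
  have hn0 : (n : ℂ) ≠ 0 := by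
    exact_mod_cast Nat.cast_ne_zero.mpr (by omega)
  have h2k : (2 : ℂ) ^ k ≠ 0 := pow_ne_zero _ two_ne_zero
  have hnk : (n : ℂ) ^ k ≠ 0 := pow_ne_zero _ hn0
  have hdiv : (∏ s : Bool × Bool × Bool, (w s / n) ^ ks s)
      = (∏ s, w s ^ ks s) / (n : ℂ) ^ k := by
    simp_rw [div_pow]
    rw [Finset.prod_div_distrib, Finset.prod_pow_eq_pow_sum, hks.1]
  simp only [hw] at hdiv ⊢
  push_cast at hdiv ⊢
  rw [hdiv]
  simp only [hF]
  field_simp
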